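/- For all integers n ≥ 2 and k ≥ 2 with n ≥ 2k, R(n, 2k-1) + R(n, 2k) = R(n+1, 2k), where R(n,s) is defined by the explicit binomial sum below. -/

import Mathlib

open Finset

/-- The number `R(n,s)` of type I/III R-decompositions with `n` crossings and
`s` Seifert circles, given by the explicit binomial sum. Note that in natural
number arithmetic `⌈(s-1)/2⌉ = s/2`, `⌊(s-1)/2⌋ = (s-1)/2`, `⌊(s+1)/2⌋ = (s+1)/2`,
and `((-1)^s+1)/2` is `1` if `s` is even and `0` otherwise. -/
def Rcount (n s : ℕ) : ℕ :=
  ∑ j ∈ Finset.Icc 1 (min (s / 2) (n / 2 - (s - 1) / 2)),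
    Nat.choose (j + (s - 1) / 2 - 1) (2 * j - (if Even s then 1 else 0) - 1) *
      Nat.choose (n - j - (s + 1) / 2) (j + (s - 1) / 2 - 1)

/-- The number `RS(n,s)` of symmetric type III R-decompositions with `n` crossings
and `s` Seifert circles; it is `0` for odd `s`, and for `s = 2k` it is given by the
explicit binomial sum, where the indicator `((-1)^{(j+k)n}+1)/2` is `1` exactly when
`(j+k)*n` is even. Note `⌈(j+k)/2⌉ = (j+k+1)/2` in natural number arithmetic. -/
def RScount (n s : ℕ) : ℕ :=
  if Even s then
    ∑ j ∈ Finset.Icc 1 (min (s / 2) (n / 2 + 1 - s / 2)),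
      (if Even ((j + s / 2) * n) then 1 else 0) *
        (Nat.choose ((j + s / 2) / 2 - 1) (j - 1) *
          Nat.choose (n / 2 - (j + s / 2 + 1) / 2) ((j + s / 2) / 2 - 1))
  else 0

lemma R0 (n : ℕ) : Rcount n 0 = 0 := by
  unfold Rcount
  rw [show min (0/2) (n/2 - (0-1)/2) = 0 from by omega]
  rw [Finset.Icc_eq_empty (by omega), Finset.sum_empty]

lemma R1 (n : ℕ) : Rcount n 1 = 0 := by
  unfold Rcount
  rw [show min (1/2) (n/2 - (1-1)/2) = 0 from by omega]
  rw [Finset.Icc_eq_empty (by omega), Finset.sum_empty]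

lemma R2 (n : ℕ) (hn : 2 ≤ n) : Rcount n 2 = 1 := by
  unfold Rcount
  rw [show min (2/2) (n/2 - (2-1)/2) = 1 from by omega]
  rw [Finset.Icc_self, Finset.sum_singleton]
  rw [if_pos (by decide : Even 2)]
  norm_num

lemma even_sum (n k N : ℕ) (hn : 2 ≤ n) (hk : 1 ≤ k) (hN : k ≤ N) :
    Rcount n (2*k) = ∑ j ∈ Finset.Icc 1 N,
      Nat.choose (j+k-2) (2*j-2) * Nat.choose (n-j-k) (j+k-2) := by
  unfold Rcount
  rw [show (if Even (2*k) then 1 else 0) = 1 from if_pos ⟨k, two_mul k⟩]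
  rw [show (2*k-1)/2 = k-1 from by omega, show (2*k+1)/2 = k from by omega,
      show (2*k)/2 = k from by omega]
  have h1 : ∀ j ∈ Finset.Icc 1 (min k (n/2 - (k-1))),
      Nat.choose (j+(k-1)-1) (2*j-1-1) * Nat.choose (n-j-k) (j+(k-1)-1)
        = Nat.choose (j+k-2) (2*j-2) * Nat.choose (n-j-k) (j+k-2) := by
    intro j hj
    rw [show j+(k-1)-1 = j+k-2 from by omega, show 2*j-1-1 = 2*j-2 from by omega]
  refine (Finset.sum_congr rfl h1).trans (Finset.sum_subset ?_ ?_)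
  · intro x hx
    simp only [Finset.mem_Icc] at *
    omega
  · intro x hx hx'
    simp only [Finset.mem_Icc] at hx hx'
    rcases le_or_gt x k with h | h
    · rw [Nat.choose_eq_zero_of_lt (show n-x-k < x+k-2 from by omega), Nat.mul_zero]
    · rw [Nat.choose_eq_zero_of_lt (show x+k-2 < 2*x-2 from by omega), Nat.zero_mul]

lemma odd_sum (n h N : ℕ) (hn : 2 ≤ n) (hN : h ≤ N) :
    Rcount n (2*h+1) = ∑ j ∈ Finset.Icc 1 N,
      Nat.choose (j+h-1) (2*j-1) * Nat.choose (n-j-(h+1)) (j+h-1) := by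
  unfold Rcount
  rw [show (if Even (2*h+1) then 1 else 0) = 0 from if_neg (by rw [Nat.even_iff]; omega)]
  rw [show (2*h+1-1)/2 = h from by omega, show (2*h+1+1)/2 = h+1 from by omega,
      show (2*h+1)/2 = h from by omega]
  simp only [Nat.sub_zero]
  have h1 : ∀ j ∈ Finset.Icc 1 (min h (n/2 - h)),
      Nat.choose (j+h-1) (2*j-1) * Nat.choose (n-j-(h+1)) (j+h-1)
        = Nat.choose (j+h-1) (2*j-1) * Nat.choose (n-j-(h+1)) (j+h-1) := fun _ _ => rfl
  refine (Finset.sum_congr rfl h1).trans (Finset.sum_subset ?_ ?_)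
  · intro x hx
    simp only [Finset.mem_Icc] at *
    omega
  · intro x hx hx'
    simp only [Finset.mem_Icc] at hx hx'
    rcases le_or_gt x h with hc | hc
    · rw [Nat.choose_eq_zero_of_lt (show n-x-(h+1) < x+h-1 from by omega), Nat.mul_zero]
    · rw [Nat.choose_eq_zero_of_lt (show x+h-1 < 2*x-1 from by omega), Nat.zero_mul]

lemma beta_odd (n h : ℕ) (hh : 1 ≤ h) (h2 : 2*h ≤ n+1) (hn : 2 ≤ n) :
    Rcount (n+2) (2*h+1) = Rcount (n+1) (2*h+1) + Rcount n (2*h) + Rcount n (2*h-1) := by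
  rw [show 2*h-1 = 2*(h-1)+1 from by omega]
  rw [odd_sum (n+2) h h (by omega) le_rfl,
      odd_sum (n+1) h h (by omega) le_rfl,
      even_sum n h h hn hh le_rfl,
      odd_sum n (h-1) h hn (by omega)]
  rw [← Finset.sum_add_distrib, ← Finset.sum_add_distrib]
  refine Finset.sum_congr rfl fun j hj => ?_
  simp only [Finset.mem_Icc] at hj
  rcases le_or_gt (j+h) n with hc | hc
  case inr =>
    have hjh : j + h = n + 1 := by omega
    rw [Nat.choose_eq_zero_of_lt (show n+2-j-(h+1) < j+h-1 from by omega),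
        Nat.choose_eq_zero_of_lt (show n+1-j-(h+1) < j+h-1 from by omega),
        Nat.choose_eq_zero_of_lt (show n-j-h < j+h-2 from by omega),
        Nat.choose_eq_zero_of_lt (show n-j-((h-1)+1) < j+(h-1)-1 from by omega)]
    simp
  rw [show n+2-j-(h+1) = (n-j-h)+1 from by omega,
      show n+1-j-(h+1) = n-j-h from by omega,
      show j+(h-1)-1 = j+h-2 from by omega,
      show n-j-((h-1)+1) = n-j-h from by omega]
  rw [show j+h-1 = (j+h-2)+1 from by omega]
  rw [Nat.choose_succ_succ (n-j-h) (j+h-2)]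
  rw [show 2*j-1 = (2*j-2)+1 from by omega]
  rw [Nat.choose_succ_succ (j+h-2) (2*j-2)]
  ring

lemma beta_even (n k : ℕ) (hk : 2 ≤ k) (h2 : 2*k ≤ n+2) (hn : 2 ≤ n) :
    Rcount (n+2) (2*k) = Rcount (n+1) (2*k) + Rcount n (2*k-2) + Rcount n (2*k-1) := by
  rw [show 2*k-2 = 2*(k-1) from by omega, show 2*k-1 = 2*(k-1)+1 from by omega]
  rw [even_sum (n+2) k k (by omega) (by omega) le_rfl,
      even_sum (n+1) k k (by omega) (by omega) le_rfl,
      even_sum n (k-1) k hn (by omega) (by omega),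
      odd_sum n (k-1) k hn (by omega)]
  -- normalize U and V bodies
  have eU : (∑ j ∈ Finset.Icc 1 k,
        Nat.choose (j+(k-1)-2) (2*j-2) * Nat.choose (n-j-(k-1)) (j+(k-1)-2))
      = ∑ j ∈ Finset.Icc 1 k,
        Nat.choose (j+k-3) (2*j-2) * Nat.choose (n+1-j-k) (j+k-3) := by
    refine Finset.sum_congr rfl fun j hj => ?_
    rw [show j+(k-1)-2 = j+k-3 from by omega, show n-j-(k-1) = n+1-j-k from by omega]
  have eV : (∑ j ∈ Finset.Icc 1 k,
        Nat.choose (j+(k-1)-1) (2*j-1) * Nat.choose (n-j-((k-1)+1)) (j+(k-1)-1))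
      = ∑ j ∈ Finset.Icc 1 k,
        Nat.choose (j+k-2) (2*j-1) * Nat.choose (n-j-k) (j+k-2) := by
    refine Finset.sum_congr rfl fun j hj => ?_
    rw [show j+(k-1)-1 = j+k-2 from by omega, show n-j-((k-1)+1) = n-j-k from by omega]
  rw [eU, eV]
  -- split LHS termwise: T2_j = T1_j + W_j
  have eT : (∑ j ∈ Finset.Icc 1 k,
        Nat.choose (j+k-2) (2*j-2) * Nat.choose (n+2-j-k) (j+k-2))
      = ∑ j ∈ Finset.Icc 1 k,
        (Nat.choose (j+k-2) (2*j-2) * Nat.choose (n+1-j-k) (j+k-2)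
          + Nat.choose (j+k-2) (2*j-2) * Nat.choose (n+1-j-k) (j+k-3)) := by
    refine Finset.sum_congr rfl fun j hj => ?_
    simp only [Finset.mem_Icc] at hj
    rcases le_or_gt (j+k) (n+1) with hc | hc
    case inr =>
      have hjk : j + k = n + 2 := by omega
      rw [Nat.choose_eq_zero_of_lt (show n+2-j-k < j+k-2 from by omega),
          Nat.choose_eq_zero_of_lt (show n+1-j-k < j+k-2 from by omega),
          Nat.choose_eq_zero_of_lt (show n+1-j-k < j+k-3 from by omega)]
      simp
    rw [show n+2-j-k = (n+1-j-k)+1 from by omega,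
        show j+k-2 = (j+k-3)+1 from by omega,
        Nat.choose_succ_succ (n+1-j-k) (j+k-3)]
    ring
  rw [eT, Finset.sum_add_distrib]
  -- shift the V sum
  have hVshift : (∑ j ∈ Finset.Icc 1 k,
        Nat.choose (j+k-2) (2*j-1) * Nat.choose (n-j-k) (j+k-2))
      = ∑ j ∈ Finset.Icc 2 k,
        Nat.choose (j+k-3) (2*j-3) * Nat.choose (n+1-j-k) (j+k-3) := by
    have hmap : Finset.Icc 2 k = Finset.map ⟨fun i => i+1, add_left_injective 1⟩ (Finset.Icc 1 (k-1)) := by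
      ext x
      simp only [Finset.mem_Icc, Finset.mem_map, Function.Embedding.coeFn_mk]
      constructor
      · intro hx; exact ⟨x-1, by omega, by omega⟩
      · rintro ⟨a, ha, rfl⟩; omega
    rw [hmap, Finset.sum_map]
    simp only [Function.Embedding.coeFn_mk]
    have hnorm : ∀ i ∈ Finset.Icc 1 (k-1),
        Nat.choose (i+1+k-3) (2*(i+1)-3) * Nat.choose (n+1-(i+1)-k) (i+1+k-3)
          = Nat.choose (i+k-2) (2*i-1) * Nat.choose (n-i-k) (i+k-2) := by
      intro i hi
      rw [show i+1+k-3 = i+k-2 from by omega, show 2*(i+1)-3 = 2*i-1 from by omega,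
          show n+1-(i+1)-k = n-i-k from by omega]
    rw [Finset.sum_congr rfl hnorm]
    refine (Finset.sum_subset (fun x hx => ?_) (fun x hx hx' => ?_)).symm
    · simp only [Finset.mem_Icc] at *; omega
    · simp only [Finset.mem_Icc] at hx hx'
      rw [Nat.choose_eq_zero_of_lt (show x+k-2 < 2*x-1 from by omega), Nat.zero_mul]
  rw [hVshift]
  -- split W and U sums at j = 1
  have hins : Finset.Icc 1 k = insert 1 (Finset.Icc 2 k) := by
    ext x; simp only [Finset.mem_Icc, Finset.mem_insert]; omega
  have hnotin : (1:ℕ) ∉ Finset.Icc 2 k := by simp [Finset.mem_Icc]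
  rw [hins]
  simp only [Finset.sum_insert hnotin]
  -- termwise Pascal on Icc 2 k : W_j = U_j + V'_j
  have eWU : (∑ j ∈ Finset.Icc 2 k,
        Nat.choose (j+k-2) (2*j-2) * Nat.choose (n+1-j-k) (j+k-3))
      = ∑ j ∈ Finset.Icc 2 k,
        (Nat.choose (j+k-3) (2*j-2) * Nat.choose (n+1-j-k) (j+k-3)
          + Nat.choose (j+k-3) (2*j-3) * Nat.choose (n+1-j-k) (j+k-3)) := by
    refine Finset.sum_congr rfl fun j hj => ?_
    simp only [Finset.mem_Icc] at hj
    rw [show j+k-2 = (j+k-3)+1 from by omega,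
        show 2*j-2 = (2*j-3)+1 from by omega,
        Nat.choose_succ_succ (j+k-3) (2*j-3)]
    ring
  rw [eWU, Finset.sum_add_distrib]
  have hW1 : Nat.choose (1+k-2) (2*1-2) * Nat.choose (n+1-1-k) (1+k-3)
      = Nat.choose (1+k-3) (2*1-2) * Nat.choose (n+1-1-k) (1+k-3) := by
    norm_num
  rw [hW1]
  ring

lemma QP (k : ℕ) :
    (∀ n, 2*k+1 ≤ n → Rcount n (2*k) + Rcount n (2*k+1) = Rcount (n+1) (2*k+1)) ∧
    (∀ n, 2*k+2 ≤ n → Rcount n (2*k+1) + Rcount n (2*k+2) = Rcount (n+1) (2*k+2)) := by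
  induction k with
  | zero =>
    constructor
    · intro n hn
      show Rcount n 0 + Rcount n 1 = Rcount (n+1) 1
      rw [R0, R1, R1]
    · intro n hn
      show Rcount n 1 + Rcount n 2 = Rcount (n+1) 2
      rw [R1, R2 n (by omega), R2 (n+1) (by omega)]
  | succ k ih =>
    have hQ : ∀ n, 2*(k+1)+1 ≤ n →
        Rcount n (2*(k+1)) + Rcount n (2*(k+1)+1) = Rcount (n+1) (2*(k+1)+1) := by
      intro n hn
      obtain ⟨m, rfl⟩ : ∃ m, n = m+1 := ⟨n-1, by omega⟩
      rw [show m+1+1 = m+2 from rfl]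
      have hb := beta_odd m (k+1) (by omega) (by omega) (by omega)
      rw [show 2*(k+1)-1 = 2*k+1 from by omega] at hb
      rw [hb]
      have hkey := ih.2 m (by omega)
      simp only [show 2*(k+1) = 2*k+2 from by ring] at *
      rw [← hkey]
      ring
    refine ⟨hQ, ?_⟩
    intro n hn
    obtain ⟨m, rfl⟩ : ∃ m, n = m+1 := ⟨n-1, by omega⟩
    rw [show m+1+1 = m+2 from rfl]
    have hb := beta_even m (k+2) (by omega) (by omega) (by omega)
    rw [show 2*(k+2) = 2*(k+1)+2 from by ring, show 2*(k+1)+2-2 = 2*(k+1) from by omega,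
        show 2*(k+1)+2-1 = 2*(k+1)+1 from by omega] at hb
    rw [hb]
    have hkey := hQ m (by omega)
    rw [← hkey]
    ring

/-- For all integers `n ≥ 2` and `k ≥ 2` with `n ≥ 2k`,
`R(n, 2k-1) + R(n, 2k) = R(n+1, 2k)`. -/
theorem Rcount_recurrence (n k : ℕ) (hn : 2 ≤ n) (hk : 2 ≤ k) (hnk : 2 * k ≤ n) :
    Rcount n (2 * k - 1) + Rcount n (2 * k) = Rcount (n + 1) (2 * k) := by
  obtain ⟨j, rfl⟩ : ∃ j, k = j+1 := ⟨k-1, by omega⟩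
  have h := (QP j).2 n (by omega)
  rw [show 2*(j+1)-1 = 2*j+1 from by omega, show 2*(j+1) = 2*j+2 from by ring]
  exact h
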